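/- None of the primes 3, 5, 7, 13, 17, 241 is congruent to 7629217 modulo 11184810; moreover, for every natural number k and every x ≡ 7629217 (mod 11184810), x − 2^k is never equal to any of 3, 5, 7, 13, 17, 241. -/
import Mathlib


theorem erdos_primes_not_in_progression :
    (∀ c : ℤ, c ∈ ({3, 5, 7, 13, 17, 241} : Set ℤ) →
      ¬ (c ≡ 7629217 [ZMOD 11184810])) ∧
    (∀ k : ℕ, ∀ x : ℤ, x ≡ 7629217 [ZMOD 11184810] →
      x - 2 ^ k ∉ ({3, 5, 7, 13, 17, 241} : Set ℤ)) := by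
  constructor
  · intro c hc
    simp only [Set.mem_insert_iff, Set.mem_singleton_iff] at hc
    rcases hc with rfl | rfl | rfl | rfl | rfl | rfl <;> decide
  · intro k x hx hmem
    simp only [Set.mem_insert_iff, Set.mem_singleton_iff] at hmem
    have h7 : x ≡ 7629217 [ZMOD 7] := hx.of_dvd (by norm_num)
    have h3 : x ≡ 7629217 [ZMOD 3] := hx.of_dvd (by norm_num)
    have hp7 : (2 : ℤ) ^ k ≡ 2 ^ (k % 3) [ZMOD 7] := by
      conv_lhs => rw [← Nat.div_add_mod k 3]
      rw [pow_add, pow_mul]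
      calc ((2 : ℤ) ^ 3) ^ (k / 3) * 2 ^ (k % 3)
          ≡ 1 ^ (k / 3) * 2 ^ (k % 3) [ZMOD 7] :=
            (Int.ModEq.pow _ (by decide)).mul_right _
        _ = 2 ^ (k % 3) := by rw [one_pow, one_mul]
    have hp3 : (2 : ℤ) ^ k ≡ 2 ^ (k % 2) [ZMOD 3] := by
      conv_lhs => rw [← Nat.div_add_mod k 2]
      rw [pow_add, pow_mul]
      calc ((2 : ℤ) ^ 2) ^ (k / 2) * 2 ^ (k % 2)
          ≡ 1 ^ (k / 2) * 2 ^ (k % 2) [ZMOD 3] :=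
            (Int.ModEq.pow _ (by decide)).mul_right _
        _ = 2 ^ (k % 2) := by rw [one_pow, one_mul]
    have hx7 := h7.sub hp7
    have hx3 := h3.sub hp3
    have hk3 : k % 3 < 3 := Nat.mod_lt _ (by norm_num)
    have hk2 : k % 2 < 2 := Nat.mod_lt _ (by norm_num)
    interval_cases h3' : k % 3 <;> interval_cases h2' : k % 2 <;>
      rcases hmem with h | h | h | h | h | h <;>
        rw [h] at hx7 hx3 <;> revert hx7 hx3 <;> decide
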